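/- A finite lattice L is join-semidistributive if and only if for every cover relation x ⋖ y in L, the set {z ∈ L : z ≤ y and z ≰ x} has a unique minimal element. -/

import Mathlib

/-- A finite lattice `L` is join-semidistributive if and only if for every cover
relation `x ⋖ y` in `L`, the set `{z : z ≤ y ∧ z ≰ x}` has a unique minimal element. -/
theorem stmt2 {L : Type*} [Lattice L] [Fintype L] :
    (∀ x y z : L, x ⊔ y = x ⊔ z → x ⊔ y = x ⊔ (y ⊓ z)) ↔
    (∀ x y : L, x ⋖ y → ∃! m : L, Minimal (fun z => z ≤ y ∧ ¬ z ≤ x) m) := by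
  constructor
  · intro hsd x y hxy
    obtain ⟨m, hmy, hm⟩ := exists_minimal_le_of_wellFoundedLT
      (fun z => z ≤ y ∧ ¬ z ≤ x) y ⟨le_refl y, fun h => hxy.lt.not_ge h⟩
    refine ⟨m, hm, fun m' hm' => ?_⟩
    -- x ⊔ m = y and x ⊔ m' = y
    have key : ∀ w : L, Minimal (fun z => z ≤ y ∧ ¬ z ≤ x) w → x ⊔ w = y := by
      intro w hw
      have h1 : x < x ⊔ w := lt_of_le_of_ne le_sup_left
        (fun h => hw.prop.2 (le_sup_right.trans h.symm.le))
      have h2 : x ⊔ w ≤ y := sup_le hxy.lt.le hw.prop.1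
      refine le_antisymm h2 ?_
      by_contra hc
      exact (hxy.2 h1) (lt_of_le_of_ne h2 (fun he => hc he.ge))
    have hmw := key m hm
    have hm'w := key m' hm'
    have := hsd x m' m (hm'w.trans hmw.symm)
    -- x ⊔ m' = x ⊔ (m' ⊓ m), so m' ⊓ m ≰ x
    have hinf : ¬ (m' ⊓ m ≤ x) := by
      intro h
      rw [sup_eq_left.mpr h] at this
      rw [hm'w] at this
      exact hxy.lt.ne this.symm
    have hinfy : m' ⊓ m ≤ y := inf_le_left.trans hm'.prop.1
    have h1 := hm'.2 ⟨hinfy, hinf⟩ inf_le_left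
    have h2 := hm.2 ⟨hinfy, hinf⟩ inf_le_right
    exact le_antisymm (h1.trans inf_le_right) (h2.trans inf_le_left)
  · intro hcov x y z hxyz
    by_contra hne
    have hle : x ⊔ (y ⊓ z) ≤ x ⊔ y := sup_le_sup_left inf_le_left _
    have hlt : x ⊔ (y ⊓ z) < x ⊔ y := lt_of_le_of_ne hle (fun h => hne h.symm)
    obtain ⟨c, hac, hcb⟩ := exists_le_covBy_of_lt hlt
    obtain ⟨m, hm, hmu⟩ := hcov c (x ⊔ y) hcb
    -- y ∈ S and z ∈ S
    have hyS : y ≤ x ⊔ y ∧ ¬ y ≤ c := by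
      refine ⟨le_sup_right, fun h => ?_⟩
      have : x ⊔ y ≤ c := sup_le (le_sup_left.trans hac) h
      exact hcb.lt.not_ge this
    have hzS : z ≤ x ⊔ y ∧ ¬ z ≤ c := by
      refine ⟨hxyz ▸ le_sup_right, fun h => ?_⟩
      have : x ⊔ z ≤ c := sup_le (le_sup_left.trans hac) h
      rw [← hxyz] at this
      exact hcb.lt.not_ge this
    obtain ⟨m1, hm1y, hm1⟩ := exists_minimal_le_of_wellFoundedLT (fun w => w ≤ x ⊔ y ∧ ¬ w ≤ c) y hyS
    obtain ⟨m2, hm2z, hm2⟩ := exists_minimal_le_of_wellFoundedLT (fun w => w ≤ x ⊔ y ∧ ¬ w ≤ c) z hzS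
    have e1 := hmu m1 hm1
    have e2 := hmu m2 hm2
    have : m ≤ y ⊓ z := le_inf (e1 ▸ hm1y) (e2 ▸ hm2z)
    exact hm.prop.2 (this.trans (le_sup_right.trans hac))
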